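/- Let P be a Markov transition kernel on a measurable space 𝒮, and suppose there exist a probability measure η on 𝒮, an integer m ≥ 1, and a constant α ∈ (0, 1] such that for all s ∈ 𝒮 and all Borel sets B, P^m(s, B) ≥ α · η(B) (Doeblin's minorization condition). Then the invariant probability measure for P is unique: any two invariant probability measures coincide. -/

import Mathlib

open MeasureTheory ENNReal

/-- The `n`-step kernel of a Markov transition kernel `P`: `kernelIter P 0 s = δ_s` and
`kernelIter P (n+1) s B = ∫ kernelIter P n s' B dP(s, ds')`, so that `kernelIter P 1 = P`
and `kernelIter P (n+1)(s, B) = ∫ (kernelIter P n)(s', B) P(s, ds')`. -/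
noncomputable def kernelIter {S : Type*} [MeasurableSpace S]
    (P : S → Measure S) : ℕ → S → Measure S
  | 0 => fun s => Measure.dirac s
  | n + 1 => fun s => (P s).bind (kernelIter P n)

lemma kernelIter_measurable {S : Type*} [MeasurableSpace S]
    (P : S → Measure S) (hP : Measurable P) : ∀ n, Measurable (kernelIter P n)
  | 0 => Measure.measurable_dirac
  | n + 1 => (Measure.measurable_bind' (kernelIter_measurable P hP n)).comp hP

lemma kernelIter_prob {S : Type*} [MeasurableSpace S]
    (P : S → Measure S) (hP : Measurable P) [∀ s, IsProbabilityMeasure (P s)] :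
    ∀ n s, IsProbabilityMeasure (kernelIter P n s)
  | 0, s => by rw [kernelIter]; infer_instance
  | n + 1, s => by
    rw [kernelIter]
    constructor
    rw [Measure.bind_apply MeasurableSet.univ (kernelIter_measurable P hP n).aemeasurable]
    have : ∀ t, kernelIter P n t Set.univ = 1 := fun t =>
      (kernelIter_prob P hP n t).measure_univ
    simp [this]

lemma kernelIter_add {S : Type*} [MeasurableSpace S]
    (P : S → Measure S) (hP : Measurable P) (a : ℕ) :
    ∀ b s, kernelIter P (a + b) s = (kernelIter P b s).bind (kernelIter P a)
  | 0, s => by rw [Nat.add_zero, kernelIter, Measure.dirac_bind (kernelIter_measurable P hP a)]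
  | b + 1, s => by
    have : a + (b + 1) = (a + b) + 1 := by ring
    rw [this, kernelIter, kernelIter]
    have h1 : ∀ t, kernelIter P (a + b) t = (kernelIter P b t).bind (kernelIter P a) :=
      fun t => kernelIter_add P hP a b t
    rw [funext h1]
    exact (Measure.bind_bind (kernelIter_measurable P hP b).aemeasurable (kernelIter_measurable P hP a).aemeasurable).symm

/-- Invariant measures are invariant for the iterated kernel. -/
lemma kernelIter_invariant {S : Type*} [MeasurableSpace S]
    (P : S → Measure S) (hP : Measurable P)
    (μ : Measure S) (hμ : ∀ A : Set S, MeasurableSet A → μ A = ∫⁻ s, P s A ∂μ) :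
    ∀ n, ∀ A : Set S, MeasurableSet A → μ A = ∫⁻ s, kernelIter P n s A ∂μ
  | 0, A, hA => by
    simp_rw [kernelIter, Measure.dirac_apply' _ hA]
    rw [lintegral_indicator_one hA]
  | n + 1, A, hA => by
    have hbind : μ.bind P = μ := by
      ext B hB
      rw [Measure.bind_apply hB hP.aemeasurable, ← hμ B hB]
    have hmeas : Measurable fun t => kernelIter P n t A :=
      (Measure.measurable_coe hA).comp (kernelIter_measurable P hP n)
    calc μ A = ∫⁻ t, kernelIter P n t A ∂μ := kernelIter_invariant P hP μ hμ n A hA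
    _ = ∫⁻ t, kernelIter P n t A ∂(μ.bind P) := by rw [hbind]
    _ = ∫⁻ s, ∫⁻ t, kernelIter P n t A ∂(P s) ∂μ := Measure.lintegral_bind hP.aemeasurable hmeas.aemeasurable
    _ = ∫⁻ s, kernelIter P (n + 1) s A ∂μ := by
        refine lintegral_congr fun s => ?_
        rw [kernelIter, Measure.bind_apply hA (kernelIter_measurable P hP n).aemeasurable]

/-- Doeblin's criterion: if there exist a probability measure `η`, an
integer `m ≥ 1` and a constant `α ∈ (0, 1]` such that `P^m(s, B) ≥ α η(B)` for all `s`
and all Borel `B`, then any two invariant probability measures of `P` coincide. -/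
theorem stmt_15
    {S : Type*} [MeasurableSpace S]
    (P : S → Measure S) (hP : Measurable P) [∀ s, IsProbabilityMeasure (P s)]
    (η : Measure S) [IsProbabilityMeasure η]
    (m : ℕ) (hm : 1 ≤ m)
    (α : ℝ≥0∞) (hα0 : 0 < α) (hα1 : α ≤ 1)
    (hDoeblin : ∀ s : S, ∀ B : Set S, MeasurableSet B → α * η B ≤ kernelIter P m s B)
    (μ₁ μ₂ : Measure S) [IsProbabilityMeasure μ₁] [IsProbabilityMeasure μ₂]
    (hμ₁ : ∀ A : Set S, MeasurableSet A → μ₁ A = ∫⁻ s, P s A ∂μ₁)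
    (hμ₂ : ∀ A : Set S, MeasurableSet A → μ₂ A = ∫⁻ s, P s A ∂μ₂) :
    μ₁ = μ₂ := by
  -- The space is nonempty (it carries a probability measure).
  cases isEmpty_or_nonempty S with
  | inl h =>
    exact absurd (measure_univ (μ := μ₁)) (by simp [Set.univ_eq_empty_iff.2 h])
  | inr hne =>
  ext A hA
  -- `f k s` is the `k*m`-step transition probability into `A` from `s`.
  set f : ℕ → S → ℝ≥0∞ := fun k s => kernelIter P (k * m) s A with hf
  have hfmeas : ∀ k, Measurable (f k) := fun k =>
    (Measure.measurable_coe hA).comp (kernelIter_measurable P hP _)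
  have hfle : ∀ k s, f k s ≤ 1 := fun k s => by
    have := kernelIter_prob P hP (k * m) s
    exact prob_le_one
  -- oscillation contraction
  have hstep : ∀ k, (⨆ s, f (k + 1) s) - (⨅ s, f (k + 1) s) ≤
      (1 - α) * ((⨆ s, f k s) - (⨅ s, f k s)) := by
    intro k
    set c : ℝ≥0∞ := α * ∫⁻ t, f k t ∂η with hc
    have hrepr : ∀ s, f (k + 1) s = ∫⁻ t, f k t ∂(kernelIter P m s) := by
      intro s
      have : (k + 1) * m = k * m + m := by ring
      simp only [hf, this, kernelIter_add P hP (k * m) m s]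
      rw [Measure.bind_apply hA (kernelIter_measurable P hP _).aemeasurable]
    have hle : ∀ s, α • η ≤ kernelIter P m s := by
      intro s
      rw [Measure.le_iff]
      intro B hB
      simpa using hDoeblin s B hB
    have hprob : ∀ s, IsProbabilityMeasure (kernelIter P m s) := kernelIter_prob P hP m
    have hfin : IsFiniteMeasure (α • η) := by
      constructor
      simp only [Measure.smul_apply, smul_eq_mul, measure_univ, mul_one]
      exact lt_of_le_of_lt hα1 one_lt_top
    have hrhouniv : ∀ s, (kernelIter P m s - α • η) Set.univ = 1 - α := by
      intro s
      have := hprob s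
      rw [Measure.sub_apply MeasurableSet.univ (hle s)]
      simp [measure_univ]
    have hdecomp : ∀ s, ∫⁻ t, f k t ∂(kernelIter P m s) =
        (∫⁻ t, f k t ∂(kernelIter P m s - α • η)) + c := by
      intro s
      conv_lhs => rw [← Measure.sub_add_cancel_of_le (hle s)]
      rw [lintegral_add_measure, hc, lintegral_smul_measure, smul_eq_mul]
    have hub : ∀ s, f (k + 1) s ≤ (1 - α) * (⨆ t, f k t) + c := by
      intro s
      rw [hrepr s, hdecomp s]
      gcongr
      calc (∫⁻ t, f k t ∂(kernelIter P m s - α • η))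
          ≤ ∫⁻ _, (⨆ t, f k t) ∂(kernelIter P m s - α • η) :=
            lintegral_mono fun t => le_iSup _ t
        _ = (1 - α) * (⨆ t, f k t) := by rw [lintegral_const, hrhouniv s, mul_comm]
    have hlb : ∀ s, (1 - α) * (⨅ t, f k t) + c ≤ f (k + 1) s := by
      intro s
      rw [hrepr s, hdecomp s]
      gcongr
      calc (1 - α) * (⨅ t, f k t) = ∫⁻ _, (⨅ t, f k t) ∂(kernelIter P m s - α • η) := by
            rw [lintegral_const, hrhouniv s, mul_comm]
        _ ≤ ∫⁻ t, f k t ∂(kernelIter P m s - α • η) := lintegral_mono fun t => iInf_le _ t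
    rw [tsub_le_iff_right]
    calc (⨆ s, f (k + 1) s) ≤ (1 - α) * (⨆ t, f k t) + c := iSup_le hub
      _ ≤ (1 - α) * (((⨆ t, f k t) - ⨅ t, f k t) + ⨅ t, f k t) + c := by
          gcongr
          exact le_tsub_add
      _ = (1 - α) * ((⨆ t, f k t) - ⨅ t, f k t) + ((1 - α) * (⨅ t, f k t) + c) := by ring
      _ ≤ (1 - α) * ((⨆ t, f k t) - ⨅ t, f k t) + ⨅ s, f (k + 1) s := by
          gcongr
          exact le_iInf hlb
  have hpow : ∀ k, (⨆ s, f k s) - (⨅ s, f k s) ≤ (1 - α) ^ k := by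
    intro k
    induction k with
    | zero =>
      simp only [pow_zero]
      exact le_trans (tsub_le_self.trans (iSup_le fun s => hfle 0 s)) le_rfl
    | succ k ih =>
      calc (⨆ s, f (k + 1) s) - (⨅ s, f (k + 1) s) ≤ (1 - α) * ((⨆ s, f k s) - ⨅ s, f k s) :=
            hstep k
        _ ≤ (1 - α) * (1 - α) ^ k := by gcongr
        _ = (1 - α) ^ (k + 1) := by ring
  -- each invariant measure's value on `A` lies between the inf and sup of `f k`
  have hbetween : ∀ (μ : Measure S), IsProbabilityMeasure μ →
      (∀ B : Set S, MeasurableSet B → μ B = ∫⁻ s, P s B ∂μ) →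
      ∀ k, (⨅ s, f k s) ≤ μ A ∧ μ A ≤ ⨆ s, f k s := by
    intro μ hμprob hμ k
    have heq : μ A = ∫⁻ s, f k s ∂μ := kernelIter_invariant P hP μ hμ (k * m) A hA
    constructor
    · rw [heq]
      calc (⨅ s, f k s) = ∫⁻ _, (⨅ s, f k s) ∂μ := by simp [measure_univ]
        _ ≤ ∫⁻ s, f k s ∂μ := lintegral_mono fun s => iInf_le _ s
    · rw [heq]
      calc ∫⁻ s, f k s ∂μ ≤ ∫⁻ _, (⨆ s, f k s) ∂μ := lintegral_mono fun s => le_iSup _ s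
        _ = ⨆ s, f k s := by simp [measure_univ]
  have hclose : ∀ (μ ν : Measure S), IsProbabilityMeasure μ → IsProbabilityMeasure ν →
      (∀ B : Set S, MeasurableSet B → μ B = ∫⁻ s, P s B ∂μ) →
      (∀ B : Set S, MeasurableSet B → ν B = ∫⁻ s, P s B ∂ν) →
      μ A ≤ ν A := by
    intro μ ν hμp hνp hμi hνi
    have hk : ∀ k, μ A ≤ ν A + (1 - α) ^ k := by
      intro k
      calc μ A ≤ ⨆ s, f k s := (hbetween μ hμp hμi k).2
        _ ≤ ((⨆ s, f k s) - ⨅ s, f k s) + ⨅ s, f k s := le_tsub_add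
        _ ≤ (1 - α) ^ k + ν A := add_le_add (hpow k) (hbetween ν hνp hνi k).1
        _ = ν A + (1 - α) ^ k := add_comm _ _
    have hlt : (1 : ℝ≥0∞) - α < 1 :=
      ENNReal.sub_lt_self one_ne_top one_ne_zero hα0.ne'
    have htend : Filter.Tendsto (fun k => ν A + (1 - α) ^ k) Filter.atTop (nhds (ν A + 0)) :=
      Filter.Tendsto.const_add _ (ENNReal.tendsto_pow_atTop_nhds_zero_of_lt_one hlt)
    have := ge_of_tendsto' htend hk
    simpa using this
  exact le_antisymm (hclose μ₁ μ₂ ‹_› ‹_› hμ₁ hμ₂) (hclose μ₂ μ₁ ‹_› ‹_› hμ₂ hμ₁)
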